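/- arXiv:2011.00868 — 5 statements merged into one kernel-verified Lean document; each statement's English description precedes it below -/
import Mathlib

section
/- Let n, c' be positive integers and 0 < ξ ≤ 1/(2c'^2). Any family of subsets of [n], in which every subset has size at least n/c' and every pair of distinct subsets shares at most ξ·n elements, has size at most 2c'. -/
lemma aux_ie {α : Type*} [DecidableEq α] (G : Finset (Finset α)) :
    2 * ∑ A ∈ G, A.card ≤ 2 * (G.biUnion id).card + ∑ p ∈ G.offDiag, (p.1 ∩ p.2).card := by
  induction G using Finset.induction_on with
  | empty => simp
  | @insert A G hA ih =>
    rw [Finset.sum_insert hA, Finset.offDiag_insert hA, Finset.biUnion_insert]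
    simp only [id_eq]
    have hd1 : Disjoint (G.offDiag ∪ {A} ×ˢ G) (G ×ˢ {A}) := by
      simp only [Finset.disjoint_left, Finset.mem_union, Finset.mem_offDiag,
        Finset.mem_product, Finset.mem_singleton]
      rintro ⟨x, y⟩ h hy
      aesop
    have hd2 : Disjoint G.offDiag ({A} ×ˢ G) := by
      simp only [Finset.disjoint_left, Finset.mem_offDiag, Finset.mem_product,
        Finset.mem_singleton]
      rintro ⟨x, y⟩ h hy
      aesop
    rw [Finset.sum_union hd1, Finset.sum_union hd2]
    have h1 : ∑ p ∈ {A} ×ˢ G, (p.1 ∩ p.2).card = ∑ B ∈ G, (A ∩ B).card := by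
      rw [Finset.singleton_product, Finset.sum_map]; rfl
    have h2 : ∑ p ∈ G ×ˢ {A}, (p.1 ∩ p.2).card = ∑ B ∈ G, (A ∩ B).card := by
      rw [Finset.product_singleton, Finset.sum_map]
      simp [Finset.inter_comm]
    have hcap : (A ∩ G.biUnion id).card ≤ ∑ B ∈ G, (A ∩ B).card := by
      calc (A ∩ G.biUnion id).card = (G.biUnion (fun B => A ∩ B)).card := by
            congr 1
            ext x; simp [Finset.mem_biUnion]; tauto
        _ ≤ ∑ B ∈ G, (A ∩ B).card := Finset.card_biUnion_le
    have hkey : A.card + (G.biUnion id).card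
        = (A ∪ G.biUnion id).card + (A ∩ G.biUnion id).card :=
      (Finset.card_union_add_card_inter _ _).symm
    omega

/-- Any family of subsets of `[n]`, each of size at least `n/c'`, with pairwise
intersections of distinct members of size at most `ξ·n` where `0 < ξ ≤ 1/(2c'²)`,
has at most `2c'` members. -/
theorem intersecting_family_bound (n c' : ℕ) (hn : 0 < n) (hc : 0 < c')
    (ξ : ℝ) (hξ0 : 0 < ξ) (hξ : ξ ≤ 1 / (2 * (c' : ℝ) ^ 2))
    (F : Finset (Finset (Fin n)))
    (hsize : ∀ A ∈ F, (n : ℝ) / (c' : ℝ) ≤ (A.card : ℝ))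
    (hint : ∀ A ∈ F, ∀ B ∈ F, A ≠ B → ((A ∩ B).card : ℝ) ≤ ξ * n) :
    F.card ≤ 2 * c' := by
  by_contra hcon
  push_neg at hcon
  obtain ⟨G, hGF, hGcard⟩ := Finset.exists_subset_card_eq (s := F) (n := 2 * c' + 1) (by omega)
  have haux := aux_ie G
  -- cast to ℝ
  have hauxR : (2 : ℝ) * ∑ A ∈ G, (A.card : ℝ) ≤
      2 * ((G.biUnion id).card : ℝ) + ∑ p ∈ G.offDiag, ((p.1 ∩ p.2).card : ℝ) := by
    exact_mod_cast haux
  have hcR : (0 : ℝ) < (c' : ℝ) := by exact_mod_cast hc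
  have hnR : (0 : ℝ) < (n : ℝ) := by exact_mod_cast hn
  -- lower bound on the sum of sizes
  have hS : ((2 * c' + 1 : ℕ) : ℝ) * ((n : ℝ) / c') ≤ ∑ A ∈ G, (A.card : ℝ) := by
    have := Finset.card_nsmul_le_sum G (fun A => (A.card : ℝ)) ((n : ℝ) / c')
      (fun A hA => hsize A (hGF hA))
    rw [hGcard] at this
    simpa [nsmul_eq_mul] using this
  -- upper bound on union
  have hU : ((G.biUnion id).card : ℝ) ≤ (n : ℝ) := by
    have : (G.biUnion id).card ≤ Fintype.card (Fin n) := Finset.card_le_univ _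
    simpa using (Nat.cast_le.2 this : ((G.biUnion id).card : ℝ) ≤ (Fintype.card (Fin n) : ℝ))
  -- upper bound on pairwise intersections sum
  have hT : ∑ p ∈ G.offDiag, ((p.1 ∩ p.2).card : ℝ) ≤
      ((2 * c' + 1 : ℕ) : ℝ) * (2 * c') * (ξ * n) := by
    have hb : ∀ p ∈ G.offDiag, ((p.1 ∩ p.2).card : ℝ) ≤ ξ * n := by
      rintro ⟨A, B⟩ hp
      rw [Finset.mem_offDiag] at hp
      exact hint A (hGF hp.1) B (hGF hp.2.1) hp.2.2
    have := Finset.sum_le_card_nsmul G.offDiag _ (ξ * n) hb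
    rw [Finset.offDiag_card, hGcard] at this
    have hcard : ((2 * c' + 1) * (2 * c' + 1) - (2 * c' + 1) : ℕ) = (2 * c' + 1) * (2 * c') := by
      ring_nf; omega
    rw [hcard] at this
    calc ∑ p ∈ G.offDiag, ((p.1 ∩ p.2).card : ℝ)
        ≤ ((2 * c' + 1) * (2 * c') : ℕ) • (ξ * n) := this
      _ = ((2 * c' + 1 : ℕ) : ℝ) * (2 * c') * (ξ * n) := by
          push_cast [nsmul_eq_mul]; ring
  have hm : ((2 * c' + 1 : ℕ) : ℝ) = 2 * (c' : ℝ) + 1 := by push_cast; ring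
  rw [hm] at hS hT
  have hξn : ξ * n ≤ 1 / (2 * (c' : ℝ) ^ 2) * n :=
    mul_le_mul_of_nonneg_right hξ hnR.le
  have h1 : (2 * (c' : ℝ) + 1) * (2 * c') * (1 / (2 * (c' : ℝ) ^ 2) * n)
      = (2 * (c' : ℝ) + 1) * (n / c') := by
    field_simp
  have hT' : ∑ p ∈ G.offDiag, ((p.1 ∩ p.2).card : ℝ) ≤ (2 * (c' : ℝ) + 1) * ((n : ℝ) / c') :=
    calc ∑ p ∈ G.offDiag, ((p.1 ∩ p.2).card : ℝ)
        ≤ (2 * (c' : ℝ) + 1) * (2 * c') * (ξ * n) := hT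
      _ ≤ (2 * (c' : ℝ) + 1) * (2 * c') * (1 / (2 * (c' : ℝ) ^ 2) * n) :=
          mul_le_mul_of_nonneg_left hξn (by positivity)
      _ = (2 * (c' : ℝ) + 1) * ((n : ℝ) / c') := h1
  have h2 : (2 * (c' : ℝ) + 1) * ((n : ℝ) / c') = 2 * n + n / c' := by
    field_simp
  linarith [div_pos hnR hcR]
end

section
/- Let x and y be permutations of [n] (strings of length n with distinct symbols), and suppose in some fixed optimal alignment of each with a reference permutation z, I_x and I_y denote the sets of symbols of z not aligned (so |I_x| equals the Ulam distance d(x,z) and |I_y| = d(y,z)). Then d(x, y) ≤ |I_x| + |I_y| − |I_x ∩ I_y|. -/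
open List

section UlamDefs
variable {α : Type*}

def moveStep (x y : List α) : Prop :=
  ∃ (a : α) (u v w z : List α), x = u ++ a :: v ∧ u ++ v = w ++ z ∧ y = w ++ a :: z

def movesTo : ℕ → List α → List α → Prop
  | 0, x, y => x = y
  | k+1, x, y => ∃ z, moveStep x z ∧ movesTo k z y

noncomputable def ulamDist (x y : List α) : ℕ := sInf {k | movesTo k x y}

def editStep (x y : List α) : Prop :=
  (∃ (a : α) (u v : List α), x = u ++ v ∧ y = u ++ a :: v) ∨
  (∃ (a : α) (u v : List α), x = u ++ a :: v ∧ y = u ++ v)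

def editsTo : ℕ → List α → List α → Prop
  | 0, x, y => x = y
  | k+1, x, y => ∃ z, editStep x z ∧ editsTo k z y

noncomputable def editDist (x y : List α) : ℕ := sInf {k | editsTo k x y}

noncomputable def lcsLen (x y : List α) : ℕ :=
  sSup {k | ∃ l : List α, l.length = k ∧ l.Sublist x ∧ l.Sublist y}

end UlamDefs

lemma moves_of_common_sublist {α : Type*} [DecidableEq α] :
    ∀ (k : ℕ) (x y w : List α), x.Nodup → x ~ y → w <+ x → w <+ y →
      x.length - w.length = k → movesTo k x y := by
  intro k
  induction k with
  | zero =>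
    intro x y w hnd hp hwx hwy hk
    have hle := hwx.length_le
    have hlen : w.length = x.length := by omega
    have hx' : w = x := hwx.eq_of_length hlen
    have hy' : w = y := hwy.eq_of_length (by rw [hlen, hp.length_eq])
    show x = y
    rw [← hx', ← hy']
  | succ m ih =>
    intro x y w hnd hp hwx hwy hk
    have hlt : w.length < x.length := by have := hwx.length_le; omega
    have hex : ∃ a ∈ x, a ∉ w := by
      by_contra h
      push_neg at h
      have hsub : x ⊆ w := fun a ha => h a ha
      have := (hnd.subperm hsub).length_le
      omega
    obtain ⟨a, hax, haw⟩ := hex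
    have hay : a ∈ y := hp.mem_iff.mp hax
    obtain ⟨u, v, hyeq⟩ := append_of_mem hay
    obtain ⟨p, q, hxeq⟩ := append_of_mem hax
    have hwy' : w <+ u ++ a :: v := hyeq ▸ hwy
    obtain ⟨w1, w2, hw12, hw1u, hw2av⟩ := sublist_append_iff.mp hwy'
    have haw2 : a ∉ w2 := fun h => haw (hw12 ▸ mem_append_right _ h)
    have hw2v : w2 <+ v := by
      cases hw2av with
      | cons _ h => exact h
      | cons_cons _ h => exact (haw2 (by simp)).elim
    have hnd' : (a :: (p ++ q)).Nodup := nodup_middle.mp (hxeq ▸ hnd)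
    have hapq : a ∉ p ++ q := (nodup_cons.mp hnd').1
    have hwpq : w <+ p ++ q := by
      have h1 : w.erase a <+ x.erase a := hwx.erase a
      rw [erase_of_not_mem haw] at h1
      rw [hxeq, erase_append_right (a :: q) (fun h => hapq (mem_append_left _ h)),
        erase_cons_head] at h1
      exact h1
    obtain ⟨l1, l2, hl12, hw1l1, hw2l2⟩ := append_sublist_iff.mp (hw12 ▸ hwpq)
    set x' : List α := l1 ++ a :: l2 with hx'def
    have hstep : moveStep x x' := ⟨a, p, q, l1, l2, hxeq, hl12, rfl⟩
    have hperm : x' ~ x := by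
      calc x' ~ a :: (l1 ++ l2) := perm_middle
        _ = a :: (p ++ q) := by rw [← hl12]
        _ ~ x := by rw [hxeq]; exact perm_middle.symm
    set w' : List α := w1 ++ a :: w2 with hw'def
    have hw'x' : w' <+ x' := hw1l1.append ((hw2l2).cons₂ a)
    have hw'y : w' <+ y := by rw [hyeq]; exact hw1u.append (hw2v.cons₂ a)
    have hlenx' : x'.length = x.length := hperm.length_eq
    have hlenw' : w'.length = w.length + 1 := by
      simp [hw'def, hw12]; omega
    have hmove : movesTo m x' y :=
      ih x' y w' (hperm.nodup_iff.mpr hnd) (hperm.trans hp) hw'x' hw'y (by omega)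
    exact ⟨x', hstep, hmove⟩

/-- If `I_x`, `I_y` are the sets of symbols of a reference permutation `z` not aligned
in fixed optimal alignments of `x` resp. `y` with `z` (so the aligned symbols form common
subsequences and `|I_x| = d(x,z)`, `|I_y| = d(y,z)`), then
`d(x,y) ≤ |I_x| + |I_y| − |I_x ∩ I_y|`. -/
theorem ulam_dist_via_unaligned (n : ℕ) (x y z : List (Fin n))
    (hx : x ~ List.finRange n) (hy : y ~ List.finRange n) (hz : z ~ List.finRange n)
    (Ix Iy : Finset (Fin n))
    (hax : (z.filter (fun a => a ∉ Ix)).Sublist x)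
    (hay : (z.filter (fun a => a ∉ Iy)).Sublist y)
    (hcx : Ix.card = ulamDist x z) (hcy : Iy.card = ulamDist y z) :
    ulamDist x y ≤ Ix.card + Iy.card - (Ix ∩ Iy).card := by
  classical
  set w : List (Fin n) := z.filter (fun a => a ∉ Ix ∪ Iy) with hwdef
  have hwx : w <+ x := by
    refine Sublist.trans ?_ hax
    exact monotone_filter_right z (fun a h => by
      simp only [decide_eq_true_eq, Finset.mem_union, not_or] at h ⊢
      exact h.1)
  have hwy : w <+ y := by
    refine Sublist.trans ?_ hay
    exact monotone_filter_right z (fun a h => by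
      simp only [decide_eq_true_eq, Finset.mem_union, not_or] at h ⊢
      exact h.2)
  have hwperm : w ~ (List.finRange n).filter (fun a => a ∉ Ix ∪ Iy) :=
    hz.filter _
  have hpos : ((List.finRange n).filter (fun a => a ∈ Ix ∪ Iy)).length
      = (Ix ∪ Iy).card := by
    have hnd : ((List.finRange n).filter (fun a => a ∈ Ix ∪ Iy)).Nodup :=
      (nodup_finRange n).filter _
    rw [← toFinset_card_of_nodup hnd]
    congr 1
    ext a
    simp [List.mem_filter]
  have hsplit : ((List.finRange n).filter (fun a => a ∉ Ix ∪ Iy)).length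
      + ((List.finRange n).filter (fun a => a ∈ Ix ∪ Iy)).length = n := by
    have h0 := List.length_eq_length_filter_add
      (l := List.finRange n) (fun a => decide (a ∉ Ix ∪ Iy))
    have heq : (List.finRange n).filter (fun a => !decide (a ∉ Ix ∪ Iy))
        = (List.finRange n).filter (fun a => a ∈ Ix ∪ Iy) := by
      apply List.filter_congr
      intro a _
      simp
    rw [heq, List.length_finRange] at h0
    omega
  have hwlen : w.length = n - (Ix ∪ Iy).card := by
    have := hwperm.length_eq
    omega
  have hxlen : x.length = n := by rw [hx.length_eq, List.length_finRange]
  have hcard : (Ix ∪ Iy).card ≤ n := by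
    have := Finset.card_le_card (Finset.subset_univ (Ix ∪ Iy))
    simpa using this
  have hmove : movesTo ((Ix ∪ Iy).card) x y := by
    apply moves_of_common_sublist ((Ix ∪ Iy).card) x y w
      (hx.nodup_iff.mpr (nodup_finRange n)) (hx.trans hy.symm) hwx hwy
    omega
  have hle : ulamDist x y ≤ (Ix ∪ Iy).card := Nat.sInf_le hmove
  have hie := Finset.card_union_add_card_inter Ix Iy
  omega
end

section
/- In the directed 'alignment' graph H on vertex set [n] built from a set S of m permutations with parameter 0 < α ≤ 1/10 — where (i,j) ∈ E(H) iff i appears before j in at least (1−2α)m permutations of S — any two 'good' symbols i, j (each unaligned in at most αm of the fixed optimal alignments with a median x_med) are joined by at least one of the directed edges (i,j) or (j,i). -/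
open List

lemma pair_sublist_of_indexOf_lt {β : Type*} [DecidableEq β] {a b : β} {l : List β}
    (hab : a ≠ b) (hb : b ∈ l) (h : l.idxOf a < l.idxOf b) : [a, b] <+ l := by
  induction l with
  | nil => simp at hb
  | cons c t ih =>
    by_cases hca : c = a
    · subst hca
      have hbt : b ∈ t := by
        rcases List.mem_cons.1 hb with h' | h'
        · exact absurd h'.symm hab
        · exact h'
      exact (List.singleton_sublist.2 hbt).cons₂ c
    · by_cases hcb : c = b
      · subst hcb
        rw [List.idxOf_cons_self] at h
        omega
      · have ha' : t.idxOf a < t.idxOf b := by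
          rw [List.idxOf_cons_ne _ hca, List.idxOf_cons_ne _ hcb] at h
          omega
        have hbt : b ∈ t := by
          rcases List.mem_cons.1 hb with h' | h'
          · exact absurd h'.symm hcb
          · exact h'
        exact (ih hbt ha').cons c

lemma indexOf_lt_of_pair_sublist {β : Type*} [DecidableEq β] {a b : β} {l : List β}
    (hab : a ≠ b) (hl : l.Nodup) (h : [a, b] <+ l) : l.idxOf a < l.idxOf b := by
  induction l with
  | nil => simp at h
  | cons c t ih =>
    rcases List.nodup_cons.1 hl with ⟨hct, ht⟩
    cases h with
    | cons _ h' =>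
      have ha : a ∈ t := h'.subset (by simp)
      have hb : b ∈ t := h'.subset (by simp)
      have hca : c ≠ a := fun e => hct (by rwa [e])
      have hcb : c ≠ b := fun e => hct (by rwa [e])
      rw [List.idxOf_cons_ne _ hca, List.idxOf_cons_ne _ hcb]
      exact Nat.succ_lt_succ (ih ht h')
    | cons_cons _ h' =>
      have hb : b ∈ t := h'.subset (by simp)
      have hab' : a ≠ b := hab
      rw [List.idxOf_cons_self, List.idxOf_cons_ne _ hab']
      omega

/-- In the alignment graph on `[n]` built from `m` permutations (edge `(i,j)` iff `i`
precedes `j` in at least `(1−2α)m` of them), any two distinct good symbols — each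
unaligned with the median in at most `αm` of the fixed optimal alignments — are joined
by a directed edge in at least one direction. -/
theorem good_symbols_have_edge (n m : ℕ) (α : ℝ) (hα0 : 0 < α) (hα : α ≤ 1 / 10)
    (x : Fin m → List (Fin n)) (hx : ∀ k, x k ~ List.finRange n)
    (xmed : List (Fin n)) (hmed : xmed ~ List.finRange n)
    (U : Fin m → Finset (Fin n))
    (halign : ∀ k, (xmed.filter (fun a => a ∉ U k)).Sublist (x k))
    (i j : Fin n) (hij : i ≠ j)
    (hgi : ((Finset.univ.filter (fun k => i ∈ U k)).card : ℝ) ≤ α * m)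
    (hgj : ((Finset.univ.filter (fun k => j ∈ U k)).card : ℝ) ≤ α * m) :
    (1 - 2 * α) * m ≤
        ((Finset.univ.filter (fun k => (x k).idxOf i < (x k).idxOf j)).card : ℝ) ∨
    (1 - 2 * α) * m ≤
        ((Finset.univ.filter (fun k => (x k).idxOf j < (x k).idxOf i)).card : ℝ) := by
  have hnodup : xmed.Nodup := hmed.nodup_iff.2 (List.nodup_finRange n)
  have hmemI : i ∈ xmed := hmed.mem_iff.2 (List.mem_finRange i)
  have hmemJ : j ∈ xmed := hmed.mem_iff.2 (List.mem_finRange j)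
  have key : ∀ (a b : Fin n), a ≠ b → [a, b] <+ xmed → ∀ k : Fin m,
      a ∉ U k → b ∉ U k → (x k).idxOf a < (x k).idxOf b := by
    intro a b hab hpair k hak hbk
    have h1 : [a, b] <+ xmed.filter (fun c => c ∉ U k) := by
      have := hpair.filter (fun c => decide (c ∉ U k))
      simpa [List.filter, hak, hbk] using this
    have h2 : [a, b] <+ x k := h1.trans (halign k)
    exact indexOf_lt_of_pair_sublist hab ((hx k).nodup_iff.2 (List.nodup_finRange n)) h2
  have hcount : (1 - 2 * α) * m ≤
      ((Finset.univ.filter (fun k : Fin m => i ∉ U k ∧ j ∉ U k)).card : ℝ) := by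
    have hsplit : (Finset.univ.filter (fun k : Fin m => i ∉ U k ∧ j ∉ U k))ᶜ ⊆
        Finset.univ.filter (fun k => i ∈ U k) ∪ Finset.univ.filter (fun k => j ∈ U k) := by
      intro k hk
      simp only [Finset.mem_compl, Finset.mem_filter, Finset.mem_union, Finset.mem_univ,
        true_and] at hk ⊢
      tauto
    have h1 : m - (Finset.univ.filter (fun k : Fin m => i ∉ U k ∧ j ∉ U k)).card ≤
        (Finset.univ.filter (fun k => i ∈ U k)).card +
        (Finset.univ.filter (fun k => j ∈ U k)).card := by
      calc m - (Finset.univ.filter (fun k : Fin m => i ∉ U k ∧ j ∉ U k)).card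
          = (Finset.univ.filter (fun k : Fin m => i ∉ U k ∧ j ∉ U k))ᶜ.card := by
            rw [Finset.card_compl, Fintype.card_fin]
        _ ≤ _ := le_trans (Finset.card_le_card hsplit) (Finset.card_union_le _ _)
    have h2 : (Finset.univ.filter (fun k : Fin m => i ∉ U k ∧ j ∉ U k)).card ≤ m := by
      simpa using Finset.card_le_card (Finset.filter_subset _ (Finset.univ : Finset (Fin m)))
    have h1' : (m : ℝ) - ((Finset.univ.filter (fun k : Fin m => i ∉ U k ∧ j ∉ U k)).card : ℝ) ≤
        ((Finset.univ.filter (fun k => i ∈ U k)).card : ℝ) +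
        ((Finset.univ.filter (fun k => j ∈ U k)).card : ℝ) := by
      have h1c : ((m - (Finset.univ.filter (fun k : Fin m => i ∉ U k ∧ j ∉ U k)).card : ℕ) : ℝ) ≤
          (((Finset.univ.filter (fun k => i ∈ U k)).card +
            (Finset.univ.filter (fun k => j ∈ U k)).card : ℕ) : ℝ) := by exact_mod_cast h1
      rw [Nat.cast_sub h2] at h1c
      push_cast at h1c
      linarith
    nlinarith [h1', hgi, hgj]
  rcases Nat.lt_or_ge (xmed.idxOf i) (xmed.idxOf j) with hlt | hge
  · left
    have hpair := pair_sublist_of_indexOf_lt hij hmemJ hlt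
    refine le_trans hcount ?_
    have hsub : (Finset.univ.filter (fun k : Fin m => i ∉ U k ∧ j ∉ U k)) ⊆
        Finset.univ.filter (fun k => (x k).idxOf i < (x k).idxOf j) := by
      intro k hk
      simp only [Finset.mem_filter, Finset.mem_univ, true_and] at hk ⊢
      exact key i j hij hpair k hk.1 hk.2
    exact_mod_cast Finset.card_le_card hsub
  · right
    have hlt : xmed.idxOf j < xmed.idxOf i := by
      rcases lt_or_eq_of_le hge with h | h
      · exact h
      · exact absurd ((List.idxOf_inj hmemJ).1 h) (Ne.symm hij)
    have hpair := pair_sublist_of_indexOf_lt (Ne.symm hij) hmemI hlt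
    refine le_trans hcount ?_
    have hsub : (Finset.univ.filter (fun k : Fin m => i ∉ U k ∧ j ∉ U k)) ⊆
        Finset.univ.filter (fun k => (x k).idxOf j < (x k).idxOf i) := by
      intro k hk
      simp only [Finset.mem_filter, Finset.mem_univ, true_and] at hk ⊢
      exact key j i (Ne.symm hij) hpair k hk.2 hk.1
    exact_mod_cast Finset.card_le_card hsub
end

section
/- Let H be a directed graph on [n] in which an edge (i,j) is present only if i precedes j in at least a (1−2α) fraction of the m permutations in S, where 0 < α ≤ 1/10. Then every directed cycle in any subgraph of H (obtained by vertex deletions) has length at least 1/(2α). -/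
open List

/-- Every directed cycle (closed walk `c : Fin L → [n]`) in the alignment graph —
where an edge `(i,j)` requires `i` to precede `j` in at least a `(1−2α)` fraction of
the `m` permutations — has length at least `1/(2α)`. This also covers any subgraph
obtained by vertex deletions, since its cycles are cycles of the original graph. -/
theorem cycle_length_lower_bound (n m : ℕ) (hm : 0 < m)
    (α : ℝ) (hα0 : 0 < α) (hα : α ≤ 1 / 10)
    (x : Fin m → List (Fin n)) (hx : ∀ k, x k ~ List.finRange n)
    (L : ℕ) [NeZero L] (c : Fin L → Fin n)
    (hcyc : ∀ t : Fin L, (1 - 2 * α) * m ≤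
      ((Finset.univ.filter
        (fun k => (x k).idxOf (c t) < (x k).idxOf (c (t + 1)))).card : ℝ)) :
    1 / (2 * α) ≤ (L : ℝ) := by
  classical
  set A : Fin L → Finset (Fin m) := fun t => Finset.univ.filter
      (fun k => (x k).idxOf (c t) < (x k).idxOf (c (t + 1))) with hA
  set B : Fin L → Finset (Fin m) := fun t => Finset.univ \ A t with hB
  -- each permutation fails some edge
  have hcover : ∀ k : Fin m, ∃ t : Fin L, k ∈ B t := by
    intro k
    by_contra h
    push_neg at h
    have hall : ∀ t : Fin L, (x k).idxOf (c t) < (x k).idxOf (c (t + 1)) := by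
      intro t
      have := h t
      simp [hB, hA] at this
      exact this
    open Fin.NatCast in
    have hmono : StrictMono (fun i : ℕ => (x k).idxOf (c (i : Fin L))) := by
      apply strictMono_nat_of_lt_succ
      intro i
      have : ((i + 1 : ℕ) : Fin L) = (i : Fin L) + 1 := by
        push_cast; ring
      rw [this]
      exact hall _
    have h0L : (0 : ℕ) < L := Nat.pos_of_ne_zero (NeZero.ne L)
    have := hmono h0L
    open Fin.NatCast in
    simp [Fin.natCast_self] at this
  -- card bound on B t
  have hBcard : ∀ t : Fin L, ((B t).card : ℝ) ≤ 2 * α * m := by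
    intro t
    have hsub : A t ⊆ Finset.univ := Finset.subset_univ _
    have : (B t).card = m - (A t).card := by
      simp [hB, Finset.card_sdiff_of_subset hsub]
    have hAle : (A t).card ≤ m := by
      simpa using Finset.card_le_card hsub
    have hcast : ((B t).card : ℝ) = m - (A t).card := by
      rw [this]
      push_cast [hAle]
      ring
    rw [hcast]
    have h' : (1 - 2 * α) * m ≤ ((A t).card : ℝ) := hcyc t
    linarith
  -- m ≤ L * (2αm)
  have hunion : (Finset.univ : Finset (Fin m)) ⊆ Finset.univ.biUnion B := by
    intro k _
    obtain ⟨t, ht⟩ := hcover k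
    exact Finset.mem_biUnion.mpr ⟨t, Finset.mem_univ _, ht⟩
  have h1 : (m : ℝ) ≤ ∑ t : Fin L, ((B t).card : ℝ) := by
    have := (Finset.card_le_card hunion).trans (Finset.card_biUnion_le)
    have := (Nat.cast_le (α := ℝ)).mpr this
    simpa using this
  have h2 : (∑ t : Fin L, ((B t).card : ℝ)) ≤ L * (2 * α * m) := by
    calc (∑ t : Fin L, ((B t).card : ℝ)) ≤ ∑ _t : Fin L, 2 * α * m :=
          Finset.sum_le_sum (fun t _ => hBcard t)
      _ = L * (2 * α * m) := by simp [Finset.sum_const, mul_assoc]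
  have hm' : (0 : ℝ) < m := by exact_mod_cast hm
  have key : (m : ℝ) ≤ L * (2 * α * m) := h1.trans h2
  rw [div_le_iff₀ (by linarith : (0 : ℝ) < 2 * α)]
  have := (mul_le_mul_iff_left₀ hm').mp (by linarith : (1 : ℝ) * m ≤ (L * (2 * α)) * m)
  linarith
end

section
/- For m permutations x_1, ..., x_m of [n], let x' be a length-n string minimizing Σ_{i∈[m]} Δ(y, x_i) over all y ∈ [n]^n, and let C be the total excess multiplicity of repeated symbols in x'. Then Σ_i Δ(x', x_i) ≥ 2mC (each repeated occurrence matches at most m/2 alignments and each missing symbol costs one deletion per string: Σ_i Δ(x',x_i) ≥ 2(m/2)C + mC = 2mC), so C ≤ (Σ_i Δ(x', x_i))/(2m); consequently the post-processed permutation x̃ obtained by deleting C excess occurrences and inserting the C missing symbols satisfies Σ_{i∈[m]} Δ(x̃, x_i) ≤ Σ_i Δ(x', x_i) + (m−1)C ≤ (3/2)·Σ_{i∈[m]} Δ(x', x_i). -/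
open List

section EditLemmas
variable {α : Type*}

lemma editStep_cons (a : α) {x y : List α} (h : editStep x y) : editStep (a::x) (a::y) := by
  rcases h with ⟨b,u,v,h1,h2⟩ | ⟨b,u,v,h1,h2⟩
  · exact Or.inl ⟨b, a::u, v, by rw [h1]; rfl, by rw [h2]; rfl⟩
  · exact Or.inr ⟨b, a::u, v, by rw [h1]; rfl, by rw [h2]; rfl⟩

lemma editsTo_cons (a : α) {k : ℕ} : ∀ {x y : List α}, editsTo k x y → editsTo k (a::x) (a::y) := by
  induction k with
  | zero =>
    intro x y h
    simp only [editsTo] at h ⊢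
    rw [h]
  | succ k ih =>
    rintro x y ⟨z, hs, ht⟩
    exact ⟨a::z, editStep_cons a hs, ih ht⟩

lemma editsTo_trans {j : ℕ} : ∀ {k : ℕ} {x z y : List α},
    editsTo j x z → editsTo k z y → editsTo (j+k) x y := by
  induction j with
  | zero =>
    intro k x z y h1 h2
    simp only [editsTo] at h1
    rw [Nat.zero_add, h1]
    exact h2
  | succ j ih =>
    rintro k x z y ⟨w, hs, ht⟩ h2
    rw [Nat.succ_add]
    exact ⟨w, hs, ih ht h2⟩

lemma editsTo_del {l x : List α} (h : l <+ x) : editsTo (x.length - l.length) x l := by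
  induction h with
  | slnil => simp only [editsTo, List.length_nil, Nat.sub_self]
  | @cons l₁ l₂ b h ih =>
    have hle := h.length_le
    have e : (b::l₂).length - l₁.length = (l₂.length - l₁.length) + 1 := by
      simp only [List.length_cons]; omega
    rw [e]
    exact ⟨l₂, Or.inr ⟨b, [], l₂, rfl, rfl⟩, ih⟩
  | @cons_cons l₁ l₂ b h ih =>
    have e : (b::l₂).length - (b::l₁).length = l₂.length - l₁.length := by
      simp only [List.length_cons]; omega
    rw [e]
    exact editsTo_cons b ih

lemma editsTo_ins {l y : List α} (h : l <+ y) : editsTo (y.length - l.length) l y := by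
  induction h with
  | slnil => simp only [editsTo, List.length_nil, Nat.sub_self]
  | @cons l₁ l₂ b h ih =>
    have hle := h.length_le
    have e : (b::l₂).length - l₁.length = (l₂.length - l₁.length) + 1 := by
      simp only [List.length_cons]; omega
    rw [e]
    exact ⟨b::l₁, Or.inl ⟨b, [], l₁, rfl, rfl⟩, editsTo_cons b ih⟩
  | @cons_cons l₁ l₂ b h ih =>
    have e : (b::l₂).length - (b::l₁).length = l₂.length - l₁.length := by
      simp only [List.length_cons]; omega
    rw [e]
    exact editsTo_cons b ih

lemma editsTo_total (x y : List α) : editsTo (x.length + y.length) x y := by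
  have h1 := editsTo_del (List.nil_sublist x)
  have h2 := editsTo_ins (List.nil_sublist y)
  simpa using editsTo_trans h1 h2

lemma editDist_le {k : ℕ} {x y : List α} (h : editsTo k x y) : editDist x y ≤ k := Nat.sInf_le h

lemma editsTo_editDist (x y : List α) : editsTo (editDist x y) x y := by
  have : editDist x y ∈ {k | editsTo k x y} :=
    Nat.sInf_mem ⟨x.length + y.length, editsTo_total x y⟩
  exact this

lemma editDist_le_of_common {l x y : List α} (hx : l <+ x) (hy : l <+ y) :
    editDist x y ≤ (x.length - l.length) + (y.length - l.length) :=
  editDist_le (editsTo_trans (editsTo_del hx) (editsTo_ins hy))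

lemma exists_shrink {l u v : List α} {a : α} (h : l <+ u ++ a :: v) :
    ∃ l', l' <+ u ++ v ∧ l' <+ l ∧ l.length ≤ l'.length + 1 := by
  rw [sublist_append_iff] at h
  obtain ⟨l1, l2, rfl, h1, h2⟩ := h
  rcases sublist_cons_iff.mp h2 with h2' | ⟨r, rfl, hr⟩
  · exact ⟨l1 ++ l2, h1.append h2', Sublist.refl _, Nat.le_succ _⟩
  · refine ⟨l1 ++ r, h1.append hr, ?_, by simp; omega⟩
    exact (append_sublist_append_left l1).mpr (sublist_cons_self a r)

lemma editsTo_lower {k : ℕ} : ∀ {x y : List α}, editsTo k x y →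
    ∃ l, l <+ x ∧ l <+ y ∧ x.length + y.length ≤ k + 2 * l.length := by
  induction k with
  | zero =>
    intro x y h
    simp only [editsTo] at h
    subst h
    exact ⟨x, Sublist.refl x, Sublist.refl x, by omega⟩
  | succ k ih =>
    rintro x y ⟨z, hs, ht⟩
    obtain ⟨l, hlz, hly, hlen⟩ := ih ht
    rcases hs with ⟨a, u, v, hxe, hze⟩ | ⟨a, u, v, hxe, hze⟩
    · subst hxe; subst hze
      obtain ⟨l', hl'1, hl'2, hl'3⟩ := exists_shrink hlz
      refine ⟨l', hl'1, (hl'2.trans hly), ?_⟩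
      have hlen2 := hl'2.length_le
      simp only [List.length_append, List.length_cons] at hlen ⊢
      omega
    · subst hxe; subst hze
      have hsub : (u ++ v : List α) <+ u ++ a :: v :=
        (append_sublist_append_left u).mpr (sublist_cons_self a v)
      refine ⟨l, hlz.trans hsub, hly, ?_⟩
      simp only [List.length_append, List.length_cons] at hlen ⊢
      omega

end EditLemmas
set_option linter.unusedSectionVars false
section CombLemmas
variable {α : Type*} [DecidableEq α]

lemma mem_first {a : α} {x : List α} (h : a ∈ x) : ∃ u v, x = u ++ a :: v ∧ a ∉ u := by
  induction x with
  | nil => cases h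
  | cons b x ih =>
    by_cases hb : b = a
    · exact ⟨[], x, by simp [hb], by simp⟩
    · have hax : a ∈ x := by
        rcases List.mem_cons.mp h with h' | h'
        · exact absurd h'.symm hb
        · exact h'
      obtain ⟨u, v, rfl, hu⟩ := ih hax
      refine ⟨b::u, v, rfl, ?_⟩
      intro hmem
      rcases List.mem_cons.mp hmem with h' | h'
      · exact hb h'.symm
      · exact hu h'

lemma mem_last {a : α} {x : List α} (h : a ∈ x) : ∃ u v, x = u ++ a :: v ∧ a ∉ v := by
  have h' : a ∈ x.reverse := by simpa using h
  obtain ⟨u, v, he, hu⟩ := mem_first h'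
  refine ⟨v.reverse, u.reverse, ?_, by simpa using hu⟩
  rw [← List.reverse_reverse x, he]
  simp [List.reverse_append]

lemma first_unique {a : α} : ∀ {u1 : List α} {v1 : List α} {u2 v2 : List α},
    u1 ++ a :: v1 = u2 ++ a :: v2 → a ∉ u1 → a ∉ u2 → u1 = u2 ∧ v1 = v2 := by
  intro u1
  induction u1 with
  | nil =>
    intro v1 u2 v2 h h1 h2
    cases u2 with
    | nil => simpa using h
    | cons b u2 =>
      rw [List.nil_append, List.cons_append] at h
      injection h with hb ht
      exact absurd (by rw [hb]; exact List.mem_cons_self) h2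
  | cons b u1 ih =>
    intro v1 u2 v2 h h1 h2
    cases u2 with
    | nil =>
      rw [List.nil_append, List.cons_append] at h
      injection h with hb ht
      exact absurd (by rw [← hb]; exact List.mem_cons_self) h1
    | cons c u2 =>
      rw [List.cons_append, List.cons_append] at h
      injection h with hb ht
      have h1' : a ∉ u1 := fun hm => h1 (List.mem_cons_of_mem b hm)
      have h2' : a ∉ u2 := fun hm => h2 (List.mem_cons_of_mem c hm)
      obtain ⟨e1, e2⟩ := ih ht h1' h2'
      exact ⟨by rw [hb, e1], e2⟩

lemma last_unique {a : α} {u1 v1 u2 v2 : List α}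
    (h : u1 ++ a :: v1 = u2 ++ a :: v2) (h1 : a ∉ v1) (h2 : a ∉ v2) : u1 = u2 ∧ v1 = v2 := by
  have e : v1.reverse ++ a :: u1.reverse = v2.reverse ++ a :: u2.reverse := by
    have := congrArg List.reverse h
    simpa [List.reverse_append] using this
  obtain ⟨e1, e2⟩ := first_unique e (by simpa using h1) (by simpa using h2)
  constructor
  · rw [← List.reverse_inj]; exact e2
  · rw [← List.reverse_inj]; exact e1

lemma afree_sublist {a : α} {z u v : List α} (hz : a ∉ z) (h : z <+ u ++ a :: v) :
    z <+ u ++ v := by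
  rw [sublist_append_iff] at h
  obtain ⟨z1, z2, rfl, h1, h2⟩ := h
  rcases sublist_cons_iff.mp h2 with h2' | ⟨r, rfl, hr⟩
  · exact h1.append h2'
  · exact absurd (by simp) hz

lemma sublist_decomp {a : α} {l x : List α} (hmem : a ∈ l) (hsub : l <+ x) :
    ∃ p q s t, l = p ++ a :: q ∧ x = s ++ a :: t ∧ p <+ s ∧ q <+ t := by
  obtain ⟨p, q, rfl⟩ := List.append_of_mem hmem
  rw [append_sublist_iff] at hsub
  obtain ⟨x1, x2, rfl, h1, h2⟩ := hsub
  rw [cons_sublist_iff] at h2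
  obtain ⟨r1, r2, rfl, har, hq⟩ := h2
  obtain ⟨s1, s2, rfl⟩ := List.append_of_mem har
  exact ⟨p, q, x1 ++ s1, s2 ++ r2, rfl, by simp [List.append_assoc],
    h1.trans (List.sublist_append_left _ _), hq.trans (List.sublist_append_right _ _)⟩

end CombLemmas
lemma core_dedup {α : Type*} [DecidableEq α] {m : ℕ} :
    ∀ (N : ℕ) (x : List α), x.length ≤ N →
    ∀ (l : Fin m → List α), (∀ i, (l i).Nodup) → (∀ i, l i <+ x) →
    ∃ (xd : List α) (l' : Fin m → List α), xd.Nodup ∧ xd.toFinset = x.toFinset ∧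
      (∀ i, l' i <+ xd ∧ l' i <+ l i) ∧
      2 * ∑ i, (l i).length ≤ 2 * ∑ i, (l' i).length + m * (x.length - x.toFinset.card) := by
  intro N
  induction N with
  | zero =>
    intro x hx l hnd hsub
    have hxe : x = [] := List.eq_nil_of_length_eq_zero (Nat.le_zero.mp hx)
    subst hxe
    exact ⟨[], l, List.nodup_nil, rfl, fun i => ⟨hsub i, Sublist.refl _⟩, Nat.le_add_right _ _⟩
  | succ N ih =>
    intro x hxN l hnd hsub
    by_cases hxnd : x.Nodup
    · exact ⟨x, l, hxnd, rfl, fun i => ⟨hsub i, Sublist.refl _⟩, Nat.le_add_right _ _⟩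
    obtain ⟨a, hdup⟩ := List.exists_duplicate_iff_not_nodup.mpr hxnd
    have hcount : 2 ≤ x.count a := List.duplicate_iff_two_le_count.mp hdup
    have hax : a ∈ x := by rw [← List.count_pos_iff]; omega
    have hchoice : ∀ i, ∃ p q s t, a ∈ l i →
        (l i = p ++ a :: q ∧ x = s ++ a :: t ∧ p <+ s ∧ q <+ t) := by
      intro i
      by_cases hi : a ∈ l i
      · obtain ⟨p, q, s, t, h1, h2, h3, h4⟩ := sublist_decomp hi (hsub i)
        exact ⟨p, q, s, t, fun _ => ⟨h1, h2, h3, h4⟩⟩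
      · exact ⟨[], [], [], [], fun h => absurd h hi⟩
    choose P Q S T hPQ using hchoice
    have hfree : ∀ i, a ∈ l i → a ∉ P i ∧ a ∉ Q i := by
      intro i hi
      obtain ⟨h1, -, -, -⟩ := hPQ i hi
      have hc1 : (l i).count a ≤ 1 := List.nodup_iff_count_le_one.mp (hnd i) a
      rw [h1, List.count_append, List.count_cons_self] at hc1
      constructor <;> rw [← List.count_eq_zero] <;> omega
    set A := Finset.univ.filter (fun i : Fin m => a ∈ l i ∧ a ∉ S i) with hA
    set B := Finset.univ.filter (fun i : Fin m => a ∈ l i ∧ a ∈ S i) with hB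
    have hdisj : Disjoint A B := by
      rw [Finset.disjoint_left]
      intro i hiA hiB
      rw [hA, Finset.mem_filter] at hiA
      rw [hB, Finset.mem_filter] at hiB
      exact hiA.2.2 hiB.2.2
    have hABm : A.card + B.card ≤ m := by
      rw [← Finset.card_union_of_disjoint hdisj]
      have := Finset.card_le_univ (A ∪ B)
      simpa using this
    obtain ⟨u, v, Br, hxeq, hBrm, hsurv, hBra⟩ :
        ∃ (u v : List α) (Br : Finset (Fin m)), x = u ++ a :: v ∧ 2 * Br.card ≤ m ∧
          (∀ i, i ∉ Br → l i <+ u ++ v) ∧ (∀ i, i ∈ Br → a ∈ l i) := by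
      by_cases hcase : A.card ≤ B.card
      · -- delete the first occurrence of a; the alignments in A break
        obtain ⟨u, v, hxe, hu⟩ := mem_first hax
        refine ⟨u, v, A, hxe, by omega, ?_, ?_⟩
        · intro i hiA
          by_cases hi : a ∈ l i
          · have hiS : a ∈ S i := by
              by_contra hiS
              exact hiA (by rw [hA]; exact Finset.mem_filter.mpr ⟨Finset.mem_univ i, hi, hiS⟩)
            obtain ⟨h1, h2, h3, h4⟩ := hPQ i hi
            obtain ⟨hp, hq⟩ := hfree i hi
            obtain ⟨u', v', hSe, hu'⟩ := mem_first hiS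
            have hcomb : u ++ a :: v = u' ++ a :: (v' ++ a :: T i) := by
              rw [← hxe, h2, hSe]; simp [List.append_assoc]
            obtain ⟨e1, e2⟩ := first_unique hcomb hu hu'
            rw [h1, e1, e2]
            have hP' : P i <+ u' ++ v' := afree_sublist hp (hSe ▸ h3)
            have : P i ++ a :: Q i <+ (u' ++ v') ++ a :: T i :=
              Sublist.append hP' (List.Sublist.cons₂ a h4)
            rw [List.append_assoc] at this
            exact this
          · exact afree_sublist hi (hxe ▸ hsub i)
        · intro i hiA; rw [hA, Finset.mem_filter] at hiA; exact hiA.2.1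
      · -- delete the last occurrence of a; the alignments in B break
        obtain ⟨u, v, hxe, hv⟩ := mem_last hax
        refine ⟨u, v, B, hxe, by omega, ?_, ?_⟩
        · intro i hiB
          by_cases hi : a ∈ l i
          · have hiS : a ∉ S i := by
              intro hiS
              exact hiB (by rw [hB]; exact Finset.mem_filter.mpr ⟨Finset.mem_univ i, hi, hiS⟩)
            obtain ⟨h1, h2, h3, h4⟩ := hPQ i hi
            obtain ⟨hp, hq⟩ := hfree i hi
            have hcnt : x.count a = (S i).count a + ((T i).count a + 1) := by
              rw [h2, List.count_append, List.count_cons_self]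
            have hS0 : (S i).count a = 0 := List.count_eq_zero.mpr hiS
            have haT : a ∈ T i := List.count_pos_iff.mp (by omega)
            obtain ⟨w1, w2, hTe, hw2⟩ := mem_last haT
            have hcomb : u ++ a :: v = (S i ++ a :: w1) ++ a :: w2 := by
              rw [← hxe, h2, hTe]; simp [List.append_assoc]
            obtain ⟨e1, e2⟩ := last_unique hcomb hv hw2
            rw [h1, e1, e2]
            have hQ' : Q i <+ w1 ++ w2 := afree_sublist hq (hTe ▸ h4)
            have : P i ++ a :: Q i <+ S i ++ a :: (w1 ++ w2) :=
              Sublist.append h3 (List.Sublist.cons₂ a hQ')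
            have he : S i ++ a :: (w1 ++ w2) = (S i ++ a :: w1) ++ w2 := by
              simp [List.append_assoc]
            rw [← he]
            exact this
          · exact afree_sublist hi (hxe ▸ hsub i)
        · intro i hiB; rw [hB, Finset.mem_filter] at hiB; exact hiB.2.1
    set l₁ : Fin m → List α := fun i => if i ∈ Br then P i ++ Q i else l i with hl₁
    have h₁l : ∀ i, l₁ i <+ l i := by
      intro i
      rw [hl₁]; dsimp only
      by_cases hi : i ∈ Br
      · rw [if_pos hi]
        obtain ⟨h1, -, -, -⟩ := hPQ i (hBra i hi)
        rw [h1]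
        exact Sublist.append (Sublist.refl _) (sublist_cons_self a _)
      · rw [if_neg hi]
    have h₁sub : ∀ i, l₁ i <+ u ++ v := by
      intro i
      by_cases hi : i ∈ Br
      · have hia := hBra i hi
        obtain ⟨hp, hq⟩ := hfree i hia
        have hfree2 : a ∉ l₁ i := by
          rw [hl₁]; dsimp only; rw [if_pos hi]
          simp only [List.mem_append]
          rintro (h' | h')
          · exact hp h'
          · exact hq h'
        exact afree_sublist hfree2 (hxeq ▸ ((h₁l i).trans (hsub i)))
      · rw [hl₁]; dsimp only; rw [if_neg hi]; exact hsurv i hi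
    have h₁nd : ∀ i, (l₁ i).Nodup := fun i => (hnd i).sublist (h₁l i)
    have h₁len : ∀ i, (l i).length ≤ (l₁ i).length + (if i ∈ Br then 1 else 0) := by
      intro i
      rw [hl₁]; dsimp only
      by_cases hi : i ∈ Br
      · rw [if_pos hi, if_pos hi]
        obtain ⟨h1, -, -, -⟩ := hPQ i (hBra i hi)
        rw [h1]; simp [List.length_append]; omega
      · rw [if_neg hi, if_neg hi]; omega
    have hsum1 : ∑ i, (l i).length ≤ ∑ i, (l₁ i).length + Br.card := by
      have h1 : ∑ i, (l i).length ≤ ∑ i, ((l₁ i).length + (if i ∈ Br then 1 else 0)) :=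
        Finset.sum_le_sum (fun i _ => h₁len i)
      have h2 : ∑ i : Fin m, ((l₁ i).length + (if i ∈ Br then 1 else 0))
          = ∑ i, (l₁ i).length + Br.card := by
        rw [Finset.sum_add_distrib]
        congr 1
        rw [Finset.sum_ite_mem, Finset.univ_inter, Finset.sum_const, smul_eq_mul, mul_one]
      omega
    have hlen2 : (u ++ v).length + 1 = x.length := by
      rw [hxeq]; simp [List.length_append]; omega
    have hfs : (u ++ v).toFinset = x.toFinset := by
      ext b
      simp only [List.mem_toFinset]
      constructor
      · intro hb
        rw [hxeq]
        rcases List.mem_append.mp hb with h' | h'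
        · exact List.mem_append.mpr (Or.inl h')
        · exact List.mem_append.mpr (Or.inr (List.mem_cons_of_mem a h'))
      · intro hb
        rw [hxeq] at hb
        rcases List.mem_append.mp hb with h' | h'
        · exact List.mem_append.mpr (Or.inl h')
        · rcases List.mem_cons.mp h' with rfl | h''
          · by_cases hbu : b ∈ u
            · exact List.mem_append.mpr (Or.inl hbu)
            · have hc0 : u.count b = 0 := List.count_eq_zero.mpr hbu
              have hc1 : x.count b = u.count b + (v.count b + 1) := by
                rw [hxeq, List.count_append, List.count_cons_self]
              have : 0 < v.count b := by omega
              exact List.mem_append.mpr (Or.inr (List.count_pos_iff.mp this))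
          · exact List.mem_append.mpr (Or.inr h'')
    have hle2 : (u ++ v).length ≤ N := by omega
    obtain ⟨xd, l'', hd1, hd2, hd3, hd4⟩ := ih (u ++ v) hle2 l₁ h₁nd h₁sub
    refine ⟨xd, l'', hd1, by rw [hd2, hfs], fun i => ⟨(hd3 i).1, (hd3 i).2.trans (h₁l i)⟩, ?_⟩
    have hcard : x.toFinset.card ≤ (u ++ v).length := by
      rw [← hfs]; exact List.toFinset_card_le _
    rw [hfs] at hd4
    have e1 : x.length - x.toFinset.card = ((u ++ v).length - x.toFinset.card) + 1 := by omega
    rw [e1, Nat.mul_add, mul_one]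
    generalize hD : m * ((u ++ v).length - x.toFinset.card) = D at hd4 ⊢
    omega
/-- For `m` permutations of `[n]` and a length-`n` string `x'` minimizing the total
insert/delete edit distance over length-`n` strings, the total excess multiplicity
`C = n − |distinct symbols of x'|` satisfies `2mC ≤ Σ_i Δ(x', x_i)`; consequently
there is a permutation `x̃` (obtained by deleting the `C` excess occurrences and
inserting the `C` missing symbols) with `Σ_i Δ(x̃, x_i) ≤ (3/2)·Σ_i Δ(x', x_i)`. -/
theorem m_strings_postprocess_bound (n m : ℕ) (x : Fin m → List (Fin n))
    (hx : ∀ i, x i ~ List.finRange n)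
    (x' : List (Fin n)) (hlen : x'.length = n)
    (hmin : ∀ y : List (Fin n), y.length = n →
      ∑ i, editDist x' (x i) ≤ ∑ i, editDist y (x i)) :
    2 * m * (n - x'.toFinset.card) ≤ ∑ i, editDist x' (x i) ∧
    ∃ xt : List (Fin n), xt ~ List.finRange n ∧
      2 * ∑ i, editDist xt (x i) ≤ 3 * ∑ i, editDist x' (x i) := by
  classical
  have hnR : (List.finRange n).length = n := List.length_finRange
  have hxi_len : ∀ i, (x i).length = n := fun i => by rw [(hx i).length_eq, hnR]
  have hxi_nd : ∀ i, (x i).Nodup := fun i => ((hx i).nodup_iff).mpr (List.nodup_finRange n)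
  have hl : ∀ i, ∃ l, l <+ x' ∧ l <+ x i ∧ 2 * n ≤ editDist x' (x i) + 2 * l.length := by
    intro i
    obtain ⟨l, h1, h2, h3⟩ := editsTo_lower (editsTo_editDist x' (x i))
    exact ⟨l, h1, h2, by rw [hlen, hxi_len i] at h3; omega⟩
  choose L hL1 hL2 hL3 using hl
  have hLnd : ∀ i, (L i).Nodup := fun i => (hxi_nd i).sublist (hL2 i)
  have hcard_le : x'.toFinset.card ≤ n := by
    have := List.toFinset_card_le x'
    omega
  have hLle : ∀ i, (L i).length ≤ x'.toFinset.card := by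
    intro i
    have h1 : (L i).toFinset.card = (L i).length := List.toFinset_card_of_nodup (hLnd i)
    have h2 : (L i).toFinset ⊆ x'.toFinset := by
      intro b hb
      rw [List.mem_toFinset] at hb ⊢
      exact (hL1 i).subset hb
    rw [← h1]
    exact Finset.card_le_card h2
  have part1 : 2 * m * (n - x'.toFinset.card) ≤ ∑ i, editDist x' (x i) := by
    have hper : ∀ i : Fin m, 2 * (n - x'.toFinset.card) ≤ editDist x' (x i) := fun i => by
      have h1 := hL3 i
      have h2 := hLle i
      omega
    calc 2 * m * (n - x'.toFinset.card)
        = ∑ _i : Fin m, 2 * (n - x'.toFinset.card) := by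
          rw [Finset.sum_const, Finset.card_univ, Fintype.card_fin, smul_eq_mul]; ring
      _ ≤ ∑ i, editDist x' (x i) := Finset.sum_le_sum (fun i _ => hper i)
  refine ⟨part1, ?_⟩
  obtain ⟨xd, l', hxdnd, hxdfs, hsubs, hsumineq⟩ :=
    core_dedup x'.length x' le_rfl L hLnd hL1
  set xt := xd ++ (List.finRange n).filter (fun b => decide (b ∉ xd)) with hxt
  have hxtnd : xt.Nodup := by
    rw [hxt, List.nodup_append]
    refine ⟨hxdnd, (List.nodup_finRange n).filter _, ?_⟩
    intro b hb c hc hbc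
    rw [List.mem_filter] at hc
    exact (by simpa using hc.2 : c ∉ xd) (hbc ▸ hb)
  have hmemt : ∀ b : Fin n, b ∈ xt := fun b => by
    rw [hxt]
    by_cases hb : b ∈ xd
    · exact List.mem_append.mpr (Or.inl hb)
    · exact List.mem_append.mpr (Or.inr (List.mem_filter.mpr
        ⟨List.mem_finRange b, by simpa using hb⟩))
  have hperm : xt ~ List.finRange n :=
    (List.perm_ext_iff_of_nodup hxtnd (List.nodup_finRange n)).mpr
      (fun b => ⟨fun _ => List.mem_finRange b, fun _ => hmemt b⟩)
  have hxtlen : xt.length = n := by rw [hperm.length_eq, hnR]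
  refine ⟨xt, hperm, ?_⟩
  have hup : ∀ i, editDist xt (x i) ≤ (n - (l' i).length) + (n - (l' i).length) := by
    intro i
    have h1 : l' i <+ xt := (hsubs i).1.trans (hxt ▸ List.sublist_append_left _ _)
    have h2 : l' i <+ x i := (hsubs i).2.trans (hL2 i)
    have h3 := editDist_le_of_common h1 h2
    rwa [hxtlen, hxi_len i] at h3
  have hlle : ∀ i, (l' i).length ≤ n := by
    intro i
    have h1 : l' i <+ xt := (hsubs i).1.trans (hxt ▸ List.sublist_append_left _ _)
    have := h1.length_le
    omega
  have hS1 : ∑ i, editDist xt (x i) ≤ ∑ i, ((n - (l' i).length) + (n - (l' i).length)) :=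
    Finset.sum_le_sum fun i _ => hup i
  have hS2 : ∑ i, ((n - (l' i).length) + (n - (l' i).length)) + 2 * ∑ i, (l' i).length
      = 2 * (m * n) := by
    rw [Finset.mul_sum, ← Finset.sum_add_distrib]
    have : ∀ i : Fin m, ((n - (l' i).length) + (n - (l' i).length)) + 2 * (l' i).length
        = 2 * n := by
      intro i
      have := hlle i
      omega
    rw [Finset.sum_congr rfl (fun i _ => this i), Finset.sum_const, Finset.card_univ,
      Fintype.card_fin, smul_eq_mul]
    ring
  have hS3 : 2 * ∑ i, (L i).length ≤ 2 * ∑ i, (l' i).length + m * (n - x'.toFinset.card) := by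
    rw [hlen] at hsumineq
    exact hsumineq
  have hS4 : 2 * (m * n) ≤ ∑ i, editDist x' (x i) + 2 * ∑ i, (L i).length := by
    have h1 : ∑ _i : Fin m, 2 * n ≤ ∑ i, (editDist x' (x i) + 2 * (L i).length) :=
      Finset.sum_le_sum (fun i _ => hL3 i)
    rw [Finset.sum_add_distrib, Finset.sum_const, Finset.card_univ, Fintype.card_fin,
      smul_eq_mul, ← Finset.mul_sum] at h1
    linarith [h1]
  have hS5 : 2 * (m * (n - x'.toFinset.card)) ≤ ∑ i, editDist x' (x i) := by
    rw [← mul_assoc]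
    exact part1
  linarith [hS1, hS2, hS3, hS4, hS5]
end
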